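/- arXiv:1805.08680 — 2 statements merged into one kernel-verified Lean document; each statement's English description precedes it below -/
import Mathlib

section
/- For every real number r > 0 and every natural number m ≥ 1, the alternating sum ∑_{i=0}^{m} (-1)^i · [Γ(r+1)/(Γ(i+1)·Γ(r-i+1))] · [Γ(r+m-i)/(Γ(m-i+1)·Γ(r))] equals 0 (while for m = 0 the sum equals 1). Equivalently, the generalized binomial coefficients satisfy ∑_{i=0}^{m} (-1)^i · C(r, i) · C(r+m-i-1, m-i) = δ_{m,0}. -/
open Polynomial Finset

private lemma gamma_asc (x : ℝ) (hx : ∀ j : ℕ, x ≠ -j) (n : ℕ) :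
    Real.Gamma (x + n) = (ascPochhammer ℝ n).eval x * Real.Gamma x := by
  induction n with
  | zero => simp
  | succ n ih =>
    have h : x + n ≠ 0 := fun h => hx n (by linarith)
    rw [Nat.cast_succ, ← add_assoc, Real.Gamma_add_one h, ih, ascPochhammer_succ_right]
    simp only [eval_mul, eval_add, eval_X, eval_natCast]
    ring

private lemma choose_eq_desc (r : ℝ) (n : ℕ) :
    Ring.choose r n = (descPochhammer ℝ n).eval r / n.factorial := by
  have h := Ring.descPochhammer_eq_factorial_smul_choose r n
  rw [Polynomial.descPochhammer_smeval_eq_ascPochhammer,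
    Polynomial.ascPochhammer_smeval_eq_eval,
    ← descPochhammer_eval_eq_ascPochhammer] at h
  rw [h, nsmul_eq_mul]
  field_simp

-- reduction coefficient
private lemma red_coeff (r : ℝ) (hr : 0 < r) (i : ℕ) :
    Real.Gamma (r + 1) / (Real.Gamma ((i : ℝ) + 1) * Real.Gamma (r - (i : ℝ) + 1))
      = Ring.choose r i := by
  rw [choose_eq_desc]
  rw [show Real.Gamma ((i:ℝ)+1) = i.factorial from Real.Gamma_nat_eq_factorial i]
  by_cases hz : ∃ n : ℕ, r - (i:ℝ) + 1 = -n
  · obtain ⟨n, hn⟩ := hz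
    rw [(Real.Gamma_eq_zero_iff _).mpr ⟨n, hn⟩, mul_zero, div_zero]
    -- r = (i - 1 - n : ℕ)
    have hin : (n:ℝ) + 1 < (i:ℝ) := by linarith
    have hin' : n + 1 < i := by exact_mod_cast hin
    have hra : r = ((i - 1 - n : ℕ) : ℝ) := by
      have : ((i - 1 - n : ℕ) : ℝ) = (i:ℝ) - 1 - n := by
        push_cast [Nat.cast_sub (by omega : n ≤ i - 1), Nat.cast_sub (by omega : 1 ≤ i)]
        ring
      rw [this]; linarith
    rw [hra, descPochhammer_eval_eq_descFactorial,
      Nat.descFactorial_eq_zero_iff_lt.mpr (by omega), Nat.cast_zero, zero_div]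
  · push_neg at hz
    have h1 : Real.Gamma (r - (i:ℝ) + 1 + i) =
        (ascPochhammer ℝ i).eval (r - (i:ℝ) + 1) * Real.Gamma (r - (i:ℝ) + 1) :=
      gamma_asc _ hz i
    rw [show r - (i:ℝ) + 1 + i = r + 1 by ring] at h1
    rw [h1, ← descPochhammer_eval_eq_ascPochhammer]
    have hg : Real.Gamma (r - (i:ℝ) + 1) ≠ 0 := Real.Gamma_ne_zero hz
    field_simp

-- accumulation coefficient
private lemma acc_coeff (r : ℝ) (hr : 0 < r) (k : ℕ) :
    Real.Gamma (r + k) / (Real.Gamma ((k : ℝ) + 1) * Real.Gamma r)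
      = (-1 : ℝ) ^ k * Ring.choose (-r) k := by
  have hx : ∀ j : ℕ, r ≠ -j := fun j h => by
    have : (0:ℝ) ≤ j := Nat.cast_nonneg j
    linarith
  rw [gamma_asc r hx k, show Real.Gamma ((k:ℝ)+1) = k.factorial from Real.Gamma_nat_eq_factorial k,
    choose_eq_desc]
  have hg : Real.Gamma r ≠ 0 := Real.Gamma_ne_zero hx
  have key : (ascPochhammer ℝ k).eval r = (-1)^k * (descPochhammer ℝ k).eval (-r) := by
    have := ascPochhammer_eval_neg_eq_descPochhammer ℝ (-r) k
    rw [neg_neg] at this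
    rw [this]
  rw [key]
  field_simp

/-- Orthogonality of the fractional-order reduction and accumulation coefficients:
for real `r > 0`, the alternating sum
`∑_{i=0}^{m} (-1)^i · [Γ(r+1)/(Γ(i+1)·Γ(r-i+1))] · [Γ(r+m-i)/(Γ(m-i+1)·Γ(r))]`
equals `1` when `m = 0` and `0` when `m ≥ 1`. -/
theorem fractional_accumulation_reduction_orthogonality
    (r : ℝ) (hr : 0 < r) (m : ℕ) :
    ∑ i ∈ Finset.range (m + 1),
        (-1 : ℝ) ^ i
          * (Real.Gamma (r + 1) / (Real.Gamma ((i : ℝ) + 1) * Real.Gamma (r - (i : ℝ) + 1)))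
          * (Real.Gamma (r + (m : ℝ) - (i : ℝ))
              / (Real.Gamma ((m : ℝ) - (i : ℝ) + 1) * Real.Gamma r))
      = if m = 0 then 1 else 0 := by
  have step : ∀ i ∈ Finset.range (m + 1),
      (-1 : ℝ) ^ i
          * (Real.Gamma (r + 1) / (Real.Gamma ((i : ℝ) + 1) * Real.Gamma (r - (i : ℝ) + 1)))
          * (Real.Gamma (r + (m : ℝ) - (i : ℝ))
              / (Real.Gamma ((m : ℝ) - (i : ℝ) + 1) * Real.Gamma r))
        = (-1 : ℝ) ^ m * (Ring.choose r i * Ring.choose (-r) (m - i)) := by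
    intro i hi
    have him : i ≤ m := by simpa [Nat.lt_succ_iff] using hi
    have hmi : (m:ℝ) - (i:ℝ) = ((m - i : ℕ) : ℝ) := by
      push_cast [Nat.cast_sub him]; ring
    rw [red_coeff r hr i,
      show r + (m:ℝ) - (i:ℝ) = r + ((m-i:ℕ):ℝ) by rw [← hmi]; ring, hmi]
    rw [acc_coeff r hr (m - i)]
    have hpow : (-1:ℝ)^i * (-1:ℝ)^(m-i) = (-1:ℝ)^m := by
      rw [← pow_add]; congr 1; omega
    ring_nf
    rw [← hpow]
    ring
  rw [Finset.sum_congr rfl step, ← Finset.mul_sum]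
  have hv : ∑ i ∈ Finset.range (m + 1), Ring.choose r i * Ring.choose (-r) (m - i)
      = Ring.choose (0:ℝ) m := by
    rw [show (0:ℝ) = r + (-r) by ring, Ring.add_choose_eq m (Commute.all r (-r)),
      Finset.Nat.sum_antidiagonal_eq_sum_range_succ_mk]
  rw [hv, Ring.choose_zero_ite]
  split_ifs with hm
  · subst hm; simp
  · simp
end

section
/- Let r > 0 be a real number, let x : ℕ → ℝ be a sequence, and define the r-order accumulation generating sequence by ξ(k) = ∑_{i=1}^{k} [Γ(r+k-i)/(Γ(k-i+1)·Γ(r))] · x(i) for k ≥ 1. Then applying the r-order reduction operator to ξ recovers the original sequence: for every k ≥ 1, ∑_{i=0}^{k-1} (-1)^i · [Γ(r+1)/(Γ(i+1)·Γ(r-i+1))] · ξ(k-i) = x(k). -/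
open Finset


noncomputable def ascP (a : ℝ) (n : ℕ) : ℝ := ∏ j ∈ range n, (a + j)

lemma ascP_zero (a : ℝ) : ascP a 0 = 1 := by simp [ascP]

lemma ascP_succ (a : ℝ) (n : ℕ) : ascP a (n+1) = ascP a n * (a + n) := by
  simp [ascP, prod_range_succ]

-- Vandermonde
lemma vand (a b : ℝ) : ∀ n : ℕ,
    ∑ i ∈ range (n+1), (n.choose i : ℝ) * ascP a i * ascP b (n-i) = ascP (a+b) n := by
  intro n
  induction n with
  | zero => simp [ascP]
  | succ n ih =>
    rw [Finset.sum_range_succ' _ (n+1)]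
    have h1 : ∀ i ∈ range (n+1),
        ((n+1).choose (i+1) : ℝ) * ascP a (i+1) * ascP b (n+1-(i+1))
        = (n.choose i : ℝ) * ascP a (i+1) * ascP b (n-i)
          + (n.choose (i+1) : ℝ) * ascP a (i+1) * ascP b (n-i) := by
      intro i hi
      have : n+1-(i+1) = n - i := by omega
      rw [this, Nat.choose_succ_succ]
      push_cast
      ring
    rw [Finset.sum_congr rfl h1, Finset.sum_add_distrib]
    have h2 : (∑ i ∈ range (n+1), (n.choose (i+1) : ℝ) * ascP a (i+1) * ascP b (n-i))
        + ((n+1).choose 0 : ℝ) * ascP a 0 * ascP b (n+1-0)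
        = ∑ i ∈ range (n+2), (n.choose i : ℝ) * ascP a i * ascP b (n+1-i) := by
      rw [Finset.sum_range_succ' _ (n+1)]
      simp
    have h3 : ∑ i ∈ range (n+2), (n.choose i : ℝ) * ascP a i * ascP b (n+1-i)
        = ∑ i ∈ range (n+1), (n.choose i : ℝ) * ascP a i * ascP b (n-i) * (b + (n-i : ℕ)) := by
      rw [Finset.sum_range_succ]
      simp only [Nat.choose_succ_self, Nat.cast_zero, zero_mul, add_zero]
      refine Finset.sum_congr rfl fun i hi => ?_
      have hi' : i ≤ n := by simpa [Nat.lt_succ_iff] using hi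
      have : n+1-i = (n-i)+1 := by omega
      rw [this, ascP_succ]
      ring
    have h4 : ∀ i ∈ range (n+1),
        (n.choose i : ℝ) * ascP a (i+1) * ascP b (n-i)
        = (n.choose i : ℝ) * ascP a i * ascP b (n-i) * (a + i) := by
      intro i hi
      rw [ascP_succ]; ring
    have h5 : ∀ i ∈ range (n+1),
        (n.choose i : ℝ) * ascP a i * ascP b (n-i) * (b + (n-i : ℕ))
          + (n.choose i : ℝ) * ascP a i * ascP b (n-i) * (a + i)
        = ((n.choose i : ℝ) * ascP a i * ascP b (n-i)) * (a + b + n) := by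
      intro i hi
      have hi' : i ≤ n := by simpa [Nat.lt_succ_iff] using hi
      have : ((n-i : ℕ) : ℝ) = (n : ℝ) - i := by
        push_cast [Nat.cast_sub hi']; ring
      rw [this]; ring
    have final : (∑ i ∈ range (n+1), (n.choose (i+1) : ℝ) * ascP a (i+1) * ascP b (n-i))
        + ((n+1).choose 0 : ℝ) * ascP a 0 * ascP b (n+1-0)
        + (∑ i ∈ range (n+1), (n.choose i : ℝ) * ascP a (i+1) * ascP b (n-i))
        = ascP (a+b) (n+1) := by
      rw [h2, h3, Finset.sum_congr rfl h4, ← Finset.sum_add_distrib,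
        Finset.sum_congr rfl h5, ← Finset.sum_mul, ih, ascP_succ]
    linarith [final]



-- Γ(r+m) = Γ(r) * ascP r m   for r > 0
lemma gamma_asc_s1 (r : ℝ) (hr : 0 < r) : ∀ m : ℕ, Real.Gamma (r + m) = Real.Gamma r * ascP r m := by
  intro m
  induction m with
  | zero => simp [ascP]
  | succ m ih =>
    have hne : r + m ≠ 0 := by positivity
    have : r + ((m:ℕ)+1 : ℕ) = (r + m) + 1 := by push_cast; ring
    rw [this, Real.Gamma_add_one hne, ih]
    simp only [ascP, prod_range_succ]
    ring

-- coefficient A: Γ(r+m)/(Γ(m+1)Γ(r)) = ascP r m / m!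
lemma coefA (r : ℝ) (hr : 0 < r) (m : ℕ) :
    Real.Gamma (r + m) / (Real.Gamma ((m:ℝ) + 1) * Real.Gamma r) = ascP r m / m.factorial := by
  rw [gamma_asc_s1 r hr m, Real.Gamma_nat_eq_factorial m]
  have h1 : Real.Gamma r ≠ 0 := (Real.Gamma_pos_of_pos hr).ne'
  have h2 : (m.factorial : ℝ) ≠ 0 := by positivity
  field_simp

noncomputable def descP (r : ℝ) (n : ℕ) : ℝ := ∏ j ∈ range n, (r - j)

lemma descP_eq_ascP_neg (r : ℝ) (n : ℕ) : (-1:ℝ)^n * descP r n = ascP (-r) n := by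
  rw [show ((-1:ℝ)^n) = ∏ _j ∈ range n, (-1:ℝ) by simp, descP, ascP,
    ← Finset.prod_mul_distrib]
  exact Finset.prod_congr rfl fun j _ => by ring

-- Γ(r+1) = Γ(r-i+1) * descP r i  when Γ(r-i+1) ≠ 0
lemma gamma_desc (r : ℝ) : ∀ i : ℕ, Real.Gamma (r - i + 1) ≠ 0 →
    Real.Gamma (r + 1) = Real.Gamma (r - i + 1) * descP r i := by
  intro i
  induction i with
  | zero => simp [descP]
  | succ i ih =>
    intro h
    have harg : r - ((i:ℕ)+1:ℕ) + 1 = r - i := by push_cast; ring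
    rw [harg] at h
    have hri : r - i ≠ 0 := by
      intro h0
      rw [h0] at h; exact h Real.Gamma_zero
    have hprev : Real.Gamma (r - i + 1) ≠ 0 := by
      rw [Real.Gamma_add_one hri]
      exact mul_ne_zero hri h
    rw [ih hprev, Real.Gamma_add_one hri, harg]
    simp only [descP, prod_range_succ]
    ring

lemma coefD (r : ℝ) (hr : 0 < r) (i : ℕ) :
    Real.Gamma (r + 1) / (Real.Gamma ((i:ℝ) + 1) * Real.Gamma (r - i + 1))
      = descP r i / i.factorial := by
  by_cases h : Real.Gamma (r - i + 1) = 0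
  · -- then r - i + 1 = -m, so r = i - 1 - m, a natural < i, and descP = 0
    rw [h, mul_zero, div_zero]
    have : ∃ m : ℕ, r - i + 1 = -m := by
      by_contra hc
      push_neg at hc
      exact Real.Gamma_ne_zero hc h
    obtain ⟨m, hm⟩ := this
    have hmi : m + 1 < i := by
      by_contra hc
      push_neg at hc
      have : (i:ℝ) ≤ (m:ℝ) + 1 := by exact_mod_cast hc
      nlinarith [hm]
    have hj : r - ((i - 1 - m : ℕ) : ℝ) = 0 := by
      have : ((i - 1 - m : ℕ) : ℝ) = (i:ℝ) - 1 - m := by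
        have h1 : i - 1 - m = i - (m + 1) := by omega
        rw [h1, Nat.cast_sub (by omega : m + 1 ≤ i)]
        push_cast; ring
      rw [this]; linarith [hm]
    symm
    rw [div_eq_zero_iff]
    left
    exact Finset.prod_eq_zero (Finset.mem_range.mpr (by omega : i - 1 - m < i)) hj
  · rw [gamma_desc r i h, Real.Gamma_nat_eq_factorial i]
    have h2 : (i.factorial : ℝ) ≠ 0 := by positivity
    field_simp




lemma ascP_zero_base (n : ℕ) : ascP 0 n = if n = 0 then 1 else 0 := by
  cases n with
  | zero => simp [ascP]
  | succ n =>
    rw [if_neg (Nat.succ_ne_zero n)]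
    exact Finset.prod_eq_zero (Finset.mem_range.mpr (Nat.succ_pos n)) (by simp)

lemma conv (r : ℝ) (n : ℕ) :
    ∑ i ∈ range (n+1), ascP (-r) i / i.factorial * (ascP r (n-i) / (n-i).factorial)
      = if n = 0 then 1 else 0 := by
  have hv := vand (-r) r n
  rw [neg_add_cancel] at hv
  have key : ∑ i ∈ range (n+1), ascP (-r) i / i.factorial * (ascP r (n-i) / (n-i).factorial)
      = (∑ i ∈ range (n+1), (n.choose i : ℝ) * ascP (-r) i * ascP r (n-i)) / n.factorial := by
    rw [Finset.sum_div]
    refine Finset.sum_congr rfl fun i hi => ?_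
    have hi' : i ≤ n := by simpa [Nat.lt_succ_iff] using hi
    rw [Nat.cast_choose ℝ hi']
    have h1 : (i.factorial : ℝ) ≠ 0 := by positivity
    have h2 : ((n-i).factorial : ℝ) ≠ 0 := by positivity
    have h3 : (n.factorial : ℝ) ≠ 0 := by positivity
    field_simp
  rw [key, hv, ascP_zero_base]
  split_ifs with h
  · subst h; simp
  · simp







/-- The r-order reduction operator is a left inverse of the r-order accumulation operator:
if `ξ k = ∑_{i=1}^{k} [Γ(r+k-i)/(Γ(k-i+1)·Γ(r))] · x i` for all `k ≥ 1`, then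
`∑_{i=0}^{k-1} (-1)^i · [Γ(r+1)/(Γ(i+1)·Γ(r-i+1))] · ξ (k-i) = x k` for all `k ≥ 1`. -/
theorem fractional_reduction_left_inverse_of_accumulation
    (r : ℝ) (hr : 0 < r) (x ξ : ℕ → ℝ)
    (hξ : ∀ k : ℕ, 1 ≤ k →
      ξ k = ∑ i ∈ Finset.Icc 1 k,
        (Real.Gamma (r + (k : ℝ) - (i : ℝ))
            / (Real.Gamma ((k : ℝ) - (i : ℝ) + 1) * Real.Gamma r)) * x i)
    (k : ℕ) (hk : 1 ≤ k) :
    ∑ i ∈ Finset.range k,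
        (-1 : ℝ) ^ i
          * (Real.Gamma (r + 1) / (Real.Gamma ((i : ℝ) + 1) * Real.Gamma (r - (i : ℝ) + 1)))
          * ξ (k - i)
      = x k := by
  have step1 : ∑ i ∈ Finset.range k,
        (-1 : ℝ) ^ i
          * (Real.Gamma (r + 1) / (Real.Gamma ((i : ℝ) + 1) * Real.Gamma (r - (i : ℝ) + 1)))
          * ξ (k - i)
      = ∑ i ∈ Finset.range k, ∑ m ∈ Finset.Icc 1 (k - i),
          ascP (-r) i / i.factorial * (ascP r (k - i - m) / (k - i - m).factorial * x m) := by
    refine Finset.sum_congr rfl fun i hi => ?_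
    have hik : i < k := Finset.mem_range.mp hi
    rw [coefD r hr i]
    have hcoef : (-1:ℝ)^i * (descP r i / i.factorial) = ascP (-r) i / i.factorial := by
      rw [← descP_eq_ascP_neg]; ring
    rw [hcoef, hξ (k - i) (by omega), Finset.mul_sum]
    refine Finset.sum_congr rfl fun m hm => ?_
    obtain ⟨hm1, hm2⟩ := Finset.mem_Icc.mp hm
    have hc1 : ((k - i : ℕ) : ℝ) - (m : ℝ) = ((k - i - m : ℕ) : ℝ) := by
      rw [Nat.cast_sub hm2, Nat.cast_sub (by omega : i ≤ k)]
    have hc2 : r + ((k - i : ℕ) : ℝ) - (m : ℝ) = r + ((k - i - m : ℕ) : ℝ) := by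
      rw [← hc1]; ring
    rw [hc2, hc1, coefA r hr (k - i - m)]
  rw [step1]
  rw [Finset.sum_comm' (s' := fun m => Finset.range (k - m + 1)) (t' := Finset.Icc 1 k)
    (fun i m => by
      simp only [Finset.mem_range, Finset.mem_Icc]
      omega)]
  have step2 : ∀ m ∈ Finset.Icc 1 k,
      (∑ i ∈ Finset.range (k - m + 1),
        ascP (-r) i / i.factorial * (ascP r (k - i - m) / (k - i - m).factorial * x m))
      = (if k - m = 0 then 1 else 0) * x m := by
    intro m hm
    obtain ⟨hm1, hm2⟩ := Finset.mem_Icc.mp hm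
    rw [← conv r (k - m), Finset.sum_mul]
    refine Finset.sum_congr rfl fun i hi => ?_
    have hi' : i ≤ k - m := by simpa [Nat.lt_succ_iff] using hi
    have : k - i - m = k - m - i := by omega
    rw [this]; ring
  rw [Finset.sum_congr rfl step2]
  rw [Finset.sum_eq_single k]
  · simp [Nat.sub_self]
  · intro m hm hne
    obtain ⟨hm1, hm2⟩ := Finset.mem_Icc.mp hm
    rw [if_neg (by omega), zero_mul]
  · intro h
    exact absurd (Finset.mem_Icc.mpr ⟨hk, le_refl k⟩) h
end
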